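/- (Perturbation bound for the Gaussian log-likelihood ratio term.) Let a, μ, μ̂ ∈ ℝⁿ, y ∈ ℝ, σ > 0, and let Σ, Σ̂ be real symmetric positive semidefinite n×n matrices. Write z = y − aᵀμ, ϱ = aᵀ(μ̂ − μ), β = ‖a‖₂², and δ = ‖Σ̂ − Σ‖ (spectral norm). Then | (y − aᵀμ̂)²/(aᵀΣ̂a + σ²) − (y − aᵀμ)²/(aᵀΣa + σ²) | ≤ (ϱ² + 2|ϱ|·|z|)/σ² + z²·β·δ/σ⁴. -/

import Mathlib

open MeasureTheory ProbabilityTheory Matrix BigOperators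

/-- Spectral (ℓ²-operator) norm of a real square matrix. -/
noncomputable def specNorm {n : ℕ} (A : Matrix (Fin n) (Fin n) ℝ) : ℝ :=
  ‖LinearMap.toContinuousLinearMap (Matrix.toEuclideanLin A)‖

lemma specNorm_bound {n : ℕ} (M : Matrix (Fin n) (Fin n) ℝ) (a : Fin n → ℝ) :
    |a ⬝ᵥ M.mulVec a| ≤ specNorm M * ∑ i, a i ^ 2 := by
  set T := LinearMap.toContinuousLinearMap (Matrix.toEuclideanLin M)
  set x : EuclideanSpace ℝ (Fin n) := WithLp.toLp 2 a
  have h1 : a ⬝ᵥ M.mulVec a = @inner ℝ _ _ x (T x) := by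
    simp [T, x, Matrix.toEuclideanLin, PiLp.inner_apply, dotProduct, Matrix.mulVec, mul_comm]
  have h2 : |@inner ℝ _ _ x (T x)| ≤ ‖x‖ * ‖T x‖ := abs_real_inner_le_norm x (T x)
  have h3 : ‖T x‖ ≤ ‖T‖ * ‖x‖ := T.le_opNorm x
  have h4 : ‖x‖ ^ 2 = ∑ i, a i ^ 2 := by
    rw [EuclideanSpace.norm_eq, Real.sq_sqrt (by positivity)]
    simp [x, sq_abs]
  have hx : 0 ≤ ‖x‖ := norm_nonneg x
  calc |a ⬝ᵥ M.mulVec a| ≤ ‖x‖ * ‖T x‖ := h1 ▸ h2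
    _ ≤ ‖x‖ * (‖T‖ * ‖x‖) := by nlinarith [norm_nonneg (T x)]
    _ = ‖T‖ * ‖x‖ ^ 2 := by ring
    _ = specNorm M * ∑ i, a i ^ 2 := by rw [h4]; rfl

/-- Perturbation bound for the Gaussian log-likelihood ratio term. -/
theorem stmt14 {n : ℕ} (a μ μhat : Fin n → ℝ) (y σ : ℝ) (hσ : 0 < σ)
    (S Shat : Matrix (Fin n) (Fin n) ℝ) (hS : S.PosSemidef) (hShat : Shat.PosSemidef)
    (z ϱ β δ : ℝ)
    (hz : z = y - a ⬝ᵥ μ) (hϱ : ϱ = a ⬝ᵥ (μhat - μ))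
    (hβ : β = ∑ i, a i ^ 2) (hδ : δ = specNorm (Shat - S)) :
    |(y - a ⬝ᵥ μhat) ^ 2 / (a ⬝ᵥ Shat.mulVec a + σ ^ 2)
        - (y - a ⬝ᵥ μ) ^ 2 / (a ⬝ᵥ S.mulVec a + σ ^ 2)|
      ≤ (ϱ ^ 2 + 2 * |ϱ| * |z|) / σ ^ 2 + z ^ 2 * β * δ / σ ^ 4 := by
  set q : ℝ := a ⬝ᵥ S.mulVec a with hqdef
  set q' : ℝ := a ⬝ᵥ Shat.mulVec a with hq'def
  have hq : 0 ≤ q := by simpa using hS.dotProduct_mulVec_nonneg a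
  have hq' : 0 ≤ q' := by simpa using hShat.dotProduct_mulVec_nonneg a
  have hs : (0:ℝ) < σ ^ 2 := by positivity
  have hqs : (0:ℝ) < q + σ ^ 2 := by linarith
  have hq's : (0:ℝ) < q' + σ ^ 2 := by linarith
  have hy : y - a ⬝ᵥ μhat = z - ϱ := by
    rw [hz, hϱ, dotProduct_sub]; ring
  have hy2 : y - a ⬝ᵥ μ = z := hz.symm
  rw [hy, hy2]
  have hqq : |q' - q| ≤ β * δ := by
    have := specNorm_bound (Shat - S) a
    have hd : a ⬝ᵥ (Shat - S).mulVec a = q' - q := by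
      rw [Matrix.sub_mulVec, dotProduct_sub]
    rw [hd] at this
    rw [hβ, hδ]; linarith [this]
  have key : (z - ϱ) ^ 2 / (q' + σ ^ 2) - z ^ 2 / (q + σ ^ 2)
      = (ϱ ^ 2 - 2 * ϱ * z) / (q' + σ ^ 2)
        + z ^ 2 * (q - q') / ((q' + σ ^ 2) * (q + σ ^ 2)) := by
    field_simp
    ring
  rw [key]
  have hX : |(ϱ ^ 2 - 2 * ϱ * z) / (q' + σ ^ 2)| ≤ (ϱ ^ 2 + 2 * |ϱ| * |z|) / σ ^ 2 := by
    rw [abs_div, abs_of_pos hq's]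
    have hnum : |ϱ ^ 2 - 2 * ϱ * z| ≤ ϱ ^ 2 + 2 * |ϱ| * |z| := by
      refine (abs_sub _ _).trans ?_
      rw [abs_pow, sq_abs]
      have h2m : |2 * ϱ * z| = 2 * |ϱ| * |z| := by
        rw [abs_mul, abs_mul]; simp [mul_assoc]
      linarith [h2m.le]
    exact div_le_div₀ (by positivity) hnum hs (by linarith)
  have hβnn : 0 ≤ β := hβ ▸ by positivity
  have hδnn : 0 ≤ δ := hδ ▸ norm_nonneg _
  have hY : |z ^ 2 * (q - q') / ((q' + σ ^ 2) * (q + σ ^ 2))| ≤ z ^ 2 * β * δ / σ ^ 4 := by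
    rw [abs_div, abs_mul, abs_pow, sq_abs, abs_of_pos (mul_pos hq's hqs)]
    have hqq' : |q - q'| ≤ β * δ := by rw [abs_sub_comm]; exact hqq
    have hden : σ ^ 4 ≤ (q' + σ ^ 2) * (q + σ ^ 2) := by nlinarith
    have : z ^ 2 * |q - q'| ≤ z ^ 2 * β * δ := by nlinarith [sq_nonneg z]
    exact div_le_div₀ (mul_nonneg (mul_nonneg (sq_nonneg z) hβnn) hδnn) this (by positivity) hden
  calc |(ϱ ^ 2 - 2 * ϱ * z) / (q' + σ ^ 2)
        + z ^ 2 * (q - q') / ((q' + σ ^ 2) * (q + σ ^ 2))|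
      ≤ |(ϱ ^ 2 - 2 * ϱ * z) / (q' + σ ^ 2)|
        + |z ^ 2 * (q - q') / ((q' + σ ^ 2) * (q + σ ^ 2))| := abs_add_le _ _
    _ ≤ (ϱ ^ 2 + 2 * |ϱ| * |z|) / σ ^ 2 + z ^ 2 * β * δ / σ ^ 4 := add_le_add hX hY
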